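/- arXiv:1808.03139 — 5 statements merged into one kernel-verified Lean document; each statement's English description precedes it below -/
import Mathlib

section
/- For every α > 0 there exists a constant c > 0 such that for every natural number n ≥ 16 there exist m, h ≥ 1 with the following properties: the graph G(m,h) (m disjoint complete binary trees of height h plus an apex adjacent to every tree vertex) has at most n vertices, and every straight-line drawing ρ of G(m,h) has ply number (with parameter α) at least c·√(n / log n). Since G(m,h) is a subgraph of a 2-tree, there are 2-trees with O(n) vertices whose every drawing has ply number Ω(√(n / log n)), for any fixed α > 0. -/
open Real Metric Set

/-- The vertex set of `G(m,h)`: an apex vertex (`none`) together with, for each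
of `m` trees, the Boolean strings of length at most `h` (the vertices of a
complete binary tree of height `h`); there are `m·(2^{h+1}−1)+1` vertices. -/
def TreeApexVertex (m h : ℕ) : Type :=
  Option (Fin m × {l : List Bool // l.length ≤ h})

/-- The graph `G(m,h)`: `m` disjoint complete binary trees of height `h`
(each string `l` of length `< h` is joined to `l ++ [b]` within the same tree)
together with an apex vertex adjacent to every tree vertex.  It is a subgraph
of a 2-tree. -/
def treesWithApex (m h : ℕ) : SimpleGraph (TreeApexVertex m h) :=
  SimpleGraph.fromRel fun x y =>
    (x = none ∧ y ≠ none) ∨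
    (∃ (i : Fin m) (l l' : {l : List Bool // l.length ≤ h}) (b : Bool),
      x = some (i, l) ∧ y = some (i, l') ∧ l'.val = l.val ++ [b])

/-- The ply-disk radius of a vertex `v` in a straight-line drawing `ρ` with
parameter `α`: `α` times the maximum distance from `ρ v` to a drawn neighbor. -/
noncomputable def plyRadius {V : Type*} (G : SimpleGraph V)
    (ρ : V → EuclideanSpace ℝ (Fin 2)) (α : ℝ) (v : V) : ℝ :=
  α * ⨆ w : G.neighborSet v, dist (ρ v) (ρ w)

abbrev Vl (h : ℕ) := {l : List Bool // l.length ≤ h}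

instance vlFinite (h : ℕ) : Finite (Vl h) := (List.finite_length_le Bool h).to_subtype

instance (m h : ℕ) : Finite (TreeApexVertex m h) := by
  unfold TreeApexVertex
  exact Finite.of_equiv _ (Equiv.optionEquivSumPUnit.{0,0} _).symm

lemma adj_apex (m h : ℕ) (x : Fin m × Vl h) : (treesWithApex m h).Adj none (some x) := by
  rw [treesWithApex]
  refine (SimpleGraph.fromRel_adj _ _ _).2 ?_
  exact ⟨(Option.some_ne_none x).symm, Or.inl (Or.inl ⟨rfl, Option.some_ne_none x⟩)⟩

lemma adj_child (m h : ℕ) (i : Fin m) (l l' : Vl h) (b : Bool) (hl : l'.val = l.val ++ [b]) :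
    (treesWithApex m h).Adj (some (i, l)) (some (i, l')) := by
  rw [treesWithApex]
  refine (SimpleGraph.fromRel_adj _ _ _).2 ?_
  refine ⟨?_, Or.inl (Or.inr ⟨i, l, l', b, rfl, rfl, hl⟩)⟩
  intro e
  have : l = l' := by
    have := Option.some_injective _ e
    exact (Prod.ext_iff.1 this).2
  apply_fun (·.val.length) at this
  simp [hl] at this

lemma plyRadius_ge {V : Type*} [Finite V] (G : SimpleGraph V)
    (ρ : V → EuclideanSpace ℝ (Fin 2)) {α : ℝ} (hα : 0 ≤ α) {v w : V} (hw : G.Adj v w) :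
    α * dist (ρ v) (ρ w) ≤ plyRadius G ρ α v := by
  unfold plyRadius
  have : dist (ρ v) (ρ w) ≤ ⨆ w : G.neighborSet v, dist (ρ v) (ρ w) :=
    le_ciSup (f := fun w : G.neighborSet v => dist (ρ v) (ρ w))
      (Set.Finite.bddAbove (Set.finite_range _)) (⟨w, hw⟩ : G.neighborSet v)
  nlinarith [dist_nonneg (x := ρ v) (y := ρ w)]

set_option maxHeartbeats 2000000 in
lemma main_lemma (α : ℝ) (hα : 0 < α) (grid : Finset (EuclideanSpace ℝ (Fin 2)))
    (hgrid : ∀ x : EuclideanSpace ℝ (Fin 2), ‖x‖ ≤ 2 → ∃ g ∈ grid, dist x g < α)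
    (J : ℕ) (hJ : 2 ≤ α * 2 ^ J)
    (h : ℕ) (hh : 1 ≤ h) (ρ : TreeApexVertex 1 h → EuclideanSpace ℝ (Fin 2))
    (hρ : Function.Injective ρ) :
    ∃ q : EuclideanSpace ℝ (Fin 2),
      (2 : ℝ) ^ h ≤ 12 * (grid.card + 1) * ((J + 1) * h) *
        (({v : TreeApexVertex 1 h |
          q ∈ Metric.ball (ρ v) (plyRadius (treesWithApex 1 h) ρ α v)}.ncard : ℝ)) ^ 2 := by
  classical
  letI : Fintype (TreeApexVertex 1 h) := Fintype.ofFinite _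
  letI : Fintype (Vl h) := Fintype.ofFinite _
  set G := treesWithApex 1 h with hGdef
  set emb : Vl h → TreeApexVertex 1 h := fun l => some (0, l) with hembdef
  have emb_inj : Function.Injective emb := by
    intro x y e
    simp only [hembdef] at e
    have h2 : ((0 : Fin 1), x) = ((0 : Fin 1), y) := Option.some_injective _ e
    exact congrArg Prod.snd h2
  set a := ρ none with hadef
  set d : Vl h → ℝ := fun l => dist (ρ (emb l)) a with hddef
  have hd : ∀ l, 0 < d l := by
    intro l
    rw [hddef]
    simp only [dist_pos]
    intro e
    exact (by simp [hembdef]; exact Option.some_ne_none _ : emb l ≠ none) (hρ e)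
  set t : Vl h → ℤ := fun l => Int.log 2 (d l) with htdef
  have ht1 : ∀ l, (2:ℝ) ^ (t l) ≤ d l := by
    intro l
    have := Int.zpow_log_le_self (R := ℝ) (b := 2) (by norm_num) (hd l)
    simpa using this
  have ht2 : ∀ l, d l < (2:ℝ) ^ (t l + 1) := by
    intro l
    have := Int.lt_zpow_succ_log_self (R := ℝ) (b := 2) (by norm_num) (d l)
    simpa using this
  have hrad_apex : ∀ l, α * d l ≤ plyRadius G ρ α (emb l) := by
    intro l
    have := plyRadius_ge G ρ hα.le ((adj_apex 1 h (0, l)).symm : G.Adj (emb l) none)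
    simpa [hddef] using this
  set cnt : EuclideanSpace ℝ (Fin 2) → Finset (TreeApexVertex 1 h) :=
    fun q => Finset.univ.filter (fun v => q ∈ Metric.ball (ρ v) (plyRadius G ρ α v)) with hcnt
  set root : Vl h := ⟨[], by simp⟩ with hroot
  set C : Finset (EuclideanSpace ℝ (Fin 2)) := insert a (insert (ρ (emb root))
      ((Finset.univ ×ˢ grid).image fun p : Vl h × EuclideanSpace ℝ (Fin 2) =>
        a + (2:ℝ) ^ (t p.1) • p.2)) with hC
  obtain ⟨q, hqC, hqmax⟩ := C.exists_max_image (fun q => (cnt q).card) ⟨a, by simp [hC]⟩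
  set K := (cnt q).card with hK
  refine ⟨q, ?_⟩
  -- (A) 1 ≤ K
  have hK1 : 1 ≤ K := by
    have hpos : 0 < plyRadius G ρ α (emb root) :=
      lt_of_lt_of_le (mul_pos hα (hd root)) (hrad_apex root)
    have hmem : emb root ∈ cnt (ρ (emb root)) := by
      rw [hcnt]
      exact Finset.mem_filter.2 ⟨Finset.mem_univ _, Metric.mem_ball_self hpos⟩
    have h1 : 1 ≤ (cnt (ρ (emb root))).card := Finset.card_pos.2 ⟨_, hmem⟩
    exact h1.trans (hqmax _ (by
      rw [hC]
      exact Finset.mem_insert_of_mem (Finset.mem_insert_self _ _)))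
  -- (B) scale bound
  have scale_bound : ∀ τ : ℤ,
      (Finset.univ.filter fun l : Vl h => t l = τ).card ≤ (grid.card + 1) * K := by
    intro τ
    set S := Finset.univ.filter (fun l : Vl h => t l = τ) with hS
    set x : Vl h → EuclideanSpace ℝ (Fin 2) :=
      fun l => (2:ℝ)^(-τ) • (ρ (emb l) - a) with hx
    have hSτ : ∀ l ∈ S, t l = τ := by
      intro l hl
      exact (Finset.mem_filter.1 hl).2
    have hnormd : ∀ l : Vl h, ‖ρ (emb l) - a‖ = d l := by
      intro l
      simp only [hddef]
      rw [dist_eq_norm]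
    have hxnorm : ∀ l ∈ S, ‖x l‖ ≤ 2 := by
      intro l hl
      have h2τ : (0:ℝ) < (2:ℝ)^(-τ) := zpow_pos two_pos _
      simp only [hx]
      rw [norm_smul, hnormd, Real.norm_eq_abs, abs_of_pos h2τ]
      have hlt := ht2 l
      rw [hSτ l hl] at hlt
      have he : (2:ℝ)^(-τ) * (2:ℝ)^(τ+1) = 2 := by
        rw [← zpow_add₀ (two_ne_zero : (2:ℝ) ≠ 0)]
        norm_num
      nlinarith [hd l]
    have hsub : S ⊆ grid.biUnion (fun g => S.filter (fun l => dist (x l) g < α)) := by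
      intro l hl
      obtain ⟨g, hg, hlt⟩ := hgrid (x l) (hxnorm l hl)
      exact Finset.mem_biUnion.2 ⟨g, hg, Finset.mem_filter.2 ⟨hl, hlt⟩⟩
    have hfil : ∀ g ∈ grid, (S.filter (fun l => dist (x l) g < α)).card ≤ K := by
      intro g hg
      rcases (S.filter (fun l => dist (x l) g < α)).eq_empty_or_nonempty with he | ⟨l₀, hl₀⟩
      · simp [he]
      · set q₀ := a + (2:ℝ)^τ • g with hq₀
        have hq₀C : q₀ ∈ C := by
          rw [hC]
          refine Finset.mem_insert_of_mem (Finset.mem_insert_of_mem ?_)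
          refine Finset.mem_image.2 ⟨(l₀, g), Finset.mem_product.2 ⟨Finset.mem_univ _, hg⟩, ?_⟩
          have ht0 : t l₀ = τ := hSτ l₀ (Finset.mem_filter.1 hl₀).1
          simp [ht0, hq₀]
        have hmem : ∀ l ∈ S.filter (fun l => dist (x l) g < α), emb l ∈ cnt q₀ := by
          intro l hl
          obtain ⟨hlS, hldist⟩ := Finset.mem_filter.1 hl
          have hτ : t l = τ := hSτ l hlS
          have hvec : q₀ - ρ (emb l) = (2:ℝ)^τ • (g - x l) := by
            simp only [hq₀, hx]
            rw [smul_sub, smul_smul, ← zpow_add₀ (two_ne_zero : (2:ℝ) ≠ 0),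
              add_neg_cancel, zpow_zero, one_smul]
            abel
          have h2τ : (0:ℝ) < (2:ℝ)^τ := zpow_pos two_pos _
          have hdist : dist q₀ (ρ (emb l)) = (2:ℝ)^τ * dist (x l) g := by
            rw [dist_eq_norm, hvec, norm_smul, Real.norm_eq_abs, abs_of_pos h2τ]
            rw [show ‖g - x l‖ = dist g (x l) from (dist_eq_norm _ _).symm, dist_comm]
          have hkey : dist q₀ (ρ (emb l)) < α * d l := by
            rw [hdist]
            have h1 : (2:ℝ)^τ * dist (x l) g < (2:ℝ)^τ * α :=
              mul_lt_mul_of_pos_left hldist h2τ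
            have h2 : (2:ℝ)^τ ≤ d l := by
              have := ht1 l
              rwa [hτ] at this
            nlinarith
          exact Finset.mem_filter.2 ⟨Finset.mem_univ _,
            Metric.mem_ball.2 (lt_of_lt_of_le hkey (hrad_apex l))⟩
        calc (S.filter (fun l => dist (x l) g < α)).card
            ≤ (cnt q₀).card := Finset.card_le_card_of_injOn emb hmem emb_inj.injOn
          _ ≤ K := hqmax _ hq₀C
    calc S.card ≤ (grid.biUnion (fun g => S.filter (fun l => dist (x l) g < α))).card :=
          Finset.card_le_card hsub
      _ ≤ ∑ g ∈ grid, (S.filter (fun l => dist (x l) g < α)).card := Finset.card_biUnion_le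
      _ ≤ grid.card * K := by
          have := Finset.sum_le_card_nsmul grid _ K hfil
          simpa [smul_eq_mul] using this
      _ ≤ (grid.card + 1) * K := Nat.mul_le_mul_right _ (Nat.le_succ _)
  -- jump lemma
  have jump : ∀ u v : Vl h, G.Adj (emb u) (emb v) → t u + (J+1 : ℤ) < t v →
      emb u ∈ cnt a := by
    intro u v hadj hlt
    have h2 : d v - d u ≤ dist (ρ (emb u)) (ρ (emb v)) := by
      calc d v - d u ≤ |d v - d u| := le_abs_self _
        _ ≤ dist (ρ (emb v)) (ρ (emb u)) := by
            have := abs_dist_sub_le (ρ (emb v)) (ρ (emb u)) a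
            simpa [hddef] using this
        _ = dist (ρ (emb u)) (ρ (emb v)) := dist_comm _ _
    have hr : α * dist (ρ (emb u)) (ρ (emb v)) ≤ plyRadius G ρ α (emb u) :=
      plyRadius_ge G ρ hα.le hadj
    have e1 : (2:ℝ) ^ (t u + 1) * 2 ^ ((J:ℤ) + 1) ≤ (2:ℝ) ^ (t v) := by
      rw [← zpow_add₀ (two_ne_zero : (2:ℝ) ≠ 0)]
      apply zpow_le_zpow_right₀ one_le_two
      omega
    have e2 : (2:ℝ)^((J:ℤ) + 1) = 2 * 2^J := by
      rw [zpow_add₀ (two_ne_zero : (2:ℝ) ≠ 0), zpow_natCast]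
      ring
    have hP : (1:ℝ) ≤ 2^J := one_le_pow₀ one_le_two
    have hA2 : (0:ℝ) < 2^(t u + 1) := zpow_pos two_pos _
    have hdu : d u < 2^(t u + 1) := ht2 u
    have hdv : (2:ℝ)^(t v) ≤ d v := ht1 v
    rw [e2] at e1
    have hkey : d u < α * dist (ρ (emb u)) (ρ (emb v)) := by
      have hmono := mul_le_mul_of_nonneg_left h2 hα.le
      have hs3 : α ≤ α * 2 ^ J := by nlinarith
      have k1 : (2:ℝ) ≤ 2 * (α * 2 ^ J) - α := by linarith
      have k2 : (2:ℝ)^(t u + 1) * 2 ≤ 2^(t u + 1) * (2 * (α * 2 ^ J) - α) :=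
        mul_le_mul_of_nonneg_left k1 hA2.le
      have k3 : (2:ℝ)^(t u + 1) * (2 * (α * 2 ^ J) - α)
          = α * (2^(t u + 1) * (2 * 2 ^ J) - 2^(t u + 1)) := by ring
      have k4 : α * ((2:ℝ)^(t u + 1) * (2 * 2 ^ J) - 2^(t u + 1)) ≤ α * (d v - d u) := by
        apply mul_le_mul_of_nonneg_left _ hα.le
        linarith
      linarith
    refine Finset.mem_filter.2 ⟨Finset.mem_univ _, Metric.mem_ball.2 ?_⟩
    have : dist a (ρ (emb u)) = d u := by rw [hddef, dist_comm]
    rw [this]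
    exact lt_of_lt_of_le hkey hr
  -- parent
  set par : Vl h → Vl h := fun l =>
    ⟨l.val.dropLast, by have := l.2; rw [List.length_dropLast]; omega⟩ with hpar
  set bad : Vl h → Prop := fun l => l.val ≠ [] ∧ (J+1 : ℤ) < |t l - t (par l)| with hbad
  set B : Finset (Vl h) := insert root (Finset.univ.filter bad) with hB
  have hBcard : B.card ≤ 3 * K + 1 := by
    have hstep : (Finset.univ.filter bad).card ≤ 3 * K := by
      set w : Vl h → Vl h := fun l => if t l ≤ t (par l) then l else par l with hw
      have hwmem : ∀ l ∈ Finset.univ.filter bad, emb (w l) ∈ cnt a := by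
        intro l hl
        obtain ⟨-, hne, habs⟩ := Finset.mem_filter.1 hl
        have hconc : l.val = (par l).val ++ [l.val.getLast hne] := by
          rw [hpar]
          exact (List.dropLast_concat_getLast hne).symm
        have hadj : G.Adj (emb (par l)) (emb l) :=
          adj_child 1 h 0 (par l) l (l.val.getLast hne) hconc
        rcases lt_abs.1 habs with hgt | hgt
        · -- t l - t (par l) > J + 1 : par l is small
          have : w l = par l := by
            rw [hw]
            simp only []
            rw [if_neg (by omega)]
          rw [this]
          exact jump (par l) l hadj (by omega)
        · -- t (par l) - t l > J + 1 : l is small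
          have : w l = l := by
            rw [hw]
            simp only []
            rw [if_pos (by omega)]
          rw [this]
          exact jump l (par l) hadj.symm (by omega)
      have hfiber : ∀ y ∈ (Finset.univ.filter bad).image w,
          ((Finset.univ.filter bad).filter (fun l => w l = y)).card ≤ 3 := by
        intro y hy
        have hsub : ((Finset.univ.filter bad).filter (fun l => w l = y)) ⊆
            insert y (Finset.univ.filter
              (fun l : Vl h => l.val = y.val ++ [false] ∨ l.val = y.val ++ [true])) := by
          intro l hl
          obtain ⟨hl1, hl2⟩ := Finset.mem_filter.1 hl
          obtain ⟨-, hne, -⟩ := Finset.mem_filter.1 hl1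
          have hwl : w l = l ∨ w l = par l := by
            rw [hw]
            simp only []
            split <;> simp
          rcases hwl with hc | hc
          · have hly : l = y := by rw [← hl2, hc]
            rw [hly]
            exact Finset.mem_insert_self _ _
          · rw [hc] at hl2
            have hconc : l.val = y.val ++ [l.val.getLast hne] := by
              rw [← hl2, hpar]
              exact (List.dropLast_concat_getLast hne).symm
            refine Finset.mem_insert_of_mem (Finset.mem_filter.2 ⟨Finset.mem_univ _, ?_⟩)
            cases hb : l.val.getLast hne
            · left; rw [hconc, hb]
            · right; rw [hconc, hb]
        have hcard2 : (Finset.univ.filter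
            (fun l : Vl h => l.val = y.val ++ [false] ∨ l.val = y.val ++ [true])).card ≤ 2 := by
          have := Finset.card_le_card_of_injOn (fun l : Vl h => l.val)
            (s := Finset.univ.filter
              (fun l : Vl h => l.val = y.val ++ [false] ∨ l.val = y.val ++ [true]))
            (t := {y.val ++ [false], y.val ++ [true]})
            (by
              intro l hl
              rcases (Finset.mem_filter.1 hl).2 with hc | hc <;> simp [hc])
            (fun l _ l' _ e => Subtype.ext e)
          calc _ ≤ ({y.val ++ [false], y.val ++ [true]} : Finset (List Bool)).card := this
            _ ≤ 2 := Finset.card_insert_le _ _ |>.trans (by simp)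
        calc ((Finset.univ.filter bad).filter (fun l => w l = y)).card
            ≤ _ := Finset.card_le_card hsub
          _ ≤ _ + 1 := Finset.card_insert_le _ _
          _ ≤ 3 := by omega
      have himg : (Finset.univ.filter bad).image w ⊆
          Finset.univ.filter (fun y : Vl h => emb y ∈ cnt a) := by
        intro y hy
        obtain ⟨l, hl, rfl⟩ := Finset.mem_image.1 hy
        exact Finset.mem_filter.2 ⟨Finset.mem_univ _, hwmem l hl⟩
      have himgcard : ((Finset.univ.filter bad).image w).card ≤ K := by
        calc ((Finset.univ.filter bad).image w).card
            ≤ (Finset.univ.filter (fun y : Vl h => emb y ∈ cnt a)).card :=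
              Finset.card_le_card himg
          _ ≤ (cnt a).card := Finset.card_le_card_of_injOn emb
              (fun y hy => (Finset.mem_filter.1 hy).2) emb_inj.injOn
          _ ≤ K := hqmax _ (by rw [hC]; exact Finset.mem_insert_self _ _)
      calc (Finset.univ.filter bad).card
          ≤ 3 * ((Finset.univ.filter bad).image w).card :=
            Finset.card_le_mul_card_image _ 3 hfiber
        _ ≤ 3 * K := Nat.mul_le_mul_left _ himgcard
    calc B.card ≤ (Finset.univ.filter bad).card + 1 := Finset.card_insert_le _ _
      _ ≤ 3 * K + 1 := by omega
  set A := h * (J + 1) with hA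
  have anchor : ∀ l : Vl h, ∃ b ∈ B, |t l - t b| ≤ (A : ℤ) := by
    have H : ∀ (n : ℕ) (l : Vl h), l.val.length = n →
        ∃ b ∈ B, |t l - t b| ≤ (n : ℤ) * (J + 1) := by
      intro n
      induction n with
      | zero =>
        intro l hl
        have hlr : l = root := Subtype.ext (List.length_eq_zero_iff.1 hl)
        exact ⟨root, Finset.mem_insert_self _ _, by rw [hlr]; simp⟩
      | succ n ih =>
        intro l hl
        by_cases hBm : l ∈ B
        · refine ⟨l, hBm, ?_⟩
          simp only [sub_self, abs_zero]
          positivity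
        · have hne : l.val ≠ [] := by
            intro e
            exact hBm (by
              rw [hB, (show l = root from Subtype.ext e)]
              exact Finset.mem_insert_self _ _)
          have hnb : ¬ bad l := fun hb => hBm (by
            rw [hB]
            exact Finset.mem_insert_of_mem (Finset.mem_filter.2 ⟨Finset.mem_univ _, hb⟩))
          have hsmall : |t l - t (par l)| ≤ (J + 1 : ℤ) := by
            simp only [hbad] at hnb
            push_neg at hnb
            exact hnb hne
          have hplen : (par l).val.length = n := by
            rw [hpar]
            simp only [List.length_dropLast, hl]
            omega
          obtain ⟨b, hbB, hbd⟩ := ih (par l) hplen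
          refine ⟨b, hbB, ?_⟩
          have htri := abs_sub_le (t l) (t (par l)) (t b)
          push_cast
          push_cast at hbd
          linarith
    intro l
    obtain ⟨b, hbB, hbd⟩ := H l.val.length l rfl
    refine ⟨b, hbB, hbd.trans ?_⟩
    have hlen : l.val.length ≤ h := l.2
    have : (A : ℤ) = (h : ℤ) * (J + 1) := by rw [hA]; push_cast; ring
    rw [this]
    have : (l.val.length : ℤ) ≤ (h : ℤ) := by exact_mod_cast hlen
    nlinarith
  -- final counting
  have hfinal : 2 ^ h ≤ 12 * (grid.card + 1) * A * K ^ 2 := by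
    set Φ : Vl h → Vl h × ℤ := fun l => ((anchor l).choose, t l - t ((anchor l).choose)) with hΦ
    set T : Finset (Vl h × ℤ) := B ×ˢ Finset.Icc (-(A:ℤ)) (A:ℤ) with hT
    have hmemT : ∀ l : Vl h, Φ l ∈ T := by
      intro l
      obtain ⟨hb1, hb2⟩ := (anchor l).choose_spec
      simp only [hΦ, hT]
      refine Finset.mem_product.2 ⟨hb1, Finset.mem_Icc.2 ?_⟩
      constructor
      · show -(A:ℤ) ≤ t l - t ((anchor l).choose)
        linarith [(abs_le.1 hb2).1]
      · show t l - t ((anchor l).choose) ≤ (A:ℤ)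
        linarith [(abs_le.1 hb2).2]
    have hcards := Finset.card_eq_sum_card_fiberwise
      (s := (Finset.univ : Finset (Vl h))) (t := T) (f := Φ) (fun x _ => hmemT x)
    have hfib : ∀ p ∈ T, (Finset.univ.filter fun l : Vl h => Φ l = p).card ≤
        (grid.card + 1) * K := by
      intro p hp
      refine le_trans (Finset.card_le_card ?_) (scale_bound (t p.1 + p.2))
      intro l hl
      have he : Φ l = p := (Finset.mem_filter.1 hl).2
      simp only [hΦ, Prod.mk.injEq, ← Prod.ext_iff] at he
      have h1 : (anchor l).choose = p.1 := congrArg Prod.fst he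
      have h2 : t l - t ((anchor l).choose) = p.2 := congrArg Prod.snd he
      refine Finset.mem_filter.2 ⟨Finset.mem_univ _, ?_⟩
      rw [← h1]
      omega
    have h1 : (Finset.univ : Finset (Vl h)).card ≤ T.card * ((grid.card + 1) * K) := by
      rw [hcards]
      have := Finset.sum_le_card_nsmul T _ ((grid.card + 1) * K) hfib
      simpa [smul_eq_mul] using this
    have hIcc : (Finset.Icc (-(A:ℤ)) (A:ℤ)).card = 2 * A + 1 := by
      rw [Int.card_Icc]
      omega
    have hTcard : T.card ≤ (3 * K + 1) * (2 * A + 1) := by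
      rw [hT, Finset.card_product, hIcc]
      exact Nat.mul_le_mul_right _ hBcard
    have hcardVl : 2 ^ h ≤ (Finset.univ : Finset (Vl h)).card := by
      rw [Finset.card_univ]
      have hinj : Function.Injective
          (fun f : Fin h → Bool => (⟨List.ofFn f, by simp⟩ : Vl h)) := by
        intro f g e
        exact List.ofFn_injective (congrArg Subtype.val e)
      have := Fintype.card_le_of_injective _ hinj
      simpa [Fintype.card_fun] using this
    have hA1 : 1 ≤ A := by
      rw [hA]
      exact Nat.one_le_iff_ne_zero.2 (by positivity)
    calc 2 ^ h ≤ (Finset.univ : Finset (Vl h)).card := hcardVl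
      _ ≤ T.card * ((grid.card + 1) * K) := h1
      _ ≤ ((3 * K + 1) * (2 * A + 1)) * ((grid.card + 1) * K) :=
          Nat.mul_le_mul_right _ hTcard
      _ ≤ ((4 * K) * (3 * A)) * ((grid.card + 1) * K) := by
          refine Nat.mul_le_mul_right _ (Nat.mul_le_mul ?_ ?_) <;> omega
      _ = 12 * (grid.card + 1) * A * K ^ 2 := by ring
  -- cast to the real statement
  have hncard : ({v : TreeApexVertex 1 h |
      q ∈ Metric.ball (ρ v) (plyRadius (treesWithApex 1 h) ρ α v)}.ncard) = K := by
    have hset : {v : TreeApexVertex 1 h |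
        q ∈ Metric.ball (ρ v) (plyRadius (treesWithApex 1 h) ρ α v)} = ↑(cnt q) := by
      ext v
      simp [hcnt, hGdef]
    rw [hset, Set.ncard_coe_finset, hK]
  rw [hncard]
  have := (Nat.cast_le (α := ℝ)).2 hfinal
  push_cast at this ⊢
  calc (2:ℝ)^h ≤ 12 * (grid.card + 1) * A * K ^ 2 := by push_cast; linarith
    _ = 12 * (grid.card + 1) * ((J+1) * h) * K ^ 2 := by push_cast [hA]; ring


set_option maxHeartbeats 1000000 in
/-- For every `α > 0` there is a constant `c > 0` such that
for every `n ≥ 16` one can choose `m, h ≥ 1` with `G(m,h)` having at most `n`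
vertices (its vertex count is `m·(2^{h+1}−1)+1`) while every straight-line
drawing of `G(m,h)` has ply number at least `c·√(n / log n)`: there are
2-trees with `O(n)` vertices requiring ply `Ω(√(n / log n))`. -/
theorem stmt9 (α : ℝ) (hα : 0 < α) :
    ∃ c : ℝ, 0 < c ∧
      ∀ n : ℕ, 16 ≤ n →
        ∃ m h : ℕ, 1 ≤ m ∧ 1 ≤ h ∧
          m * (2 ^ (h + 1) - 1) + 1 ≤ n ∧
          ∀ ρ : TreeApexVertex m h → EuclideanSpace ℝ (Fin 2),
            Function.Injective ρ →
            ∃ q : EuclideanSpace ℝ (Fin 2),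
              c * Real.sqrt ((n : ℝ) / Real.log n) ≤
                (Set.ncard {v : TreeApexVertex m h |
                  q ∈ Metric.ball (ρ v) (plyRadius (treesWithApex m h) ρ α v)} : ℝ) := by
  classical
  -- a finite grid covering the ball of radius 2 with balls of radius α
  obtain ⟨grid, hgrid⟩ : ∃ grid : Finset (EuclideanSpace ℝ (Fin 2)),
      ∀ x : EuclideanSpace ℝ (Fin 2), ‖x‖ ≤ 2 → ∃ g ∈ grid, dist x g < α := by
    obtain ⟨tset, htset⟩ := (isCompact_closedBall (0 : EuclideanSpace ℝ (Fin 2)) 2).elim_finite_subcover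
      (fun g : EuclideanSpace ℝ (Fin 2) => Metric.ball g α) (fun g => Metric.isOpen_ball)
      (fun x _ => Set.mem_iUnion.2 ⟨x, Metric.mem_ball_self hα⟩)
    refine ⟨tset, fun x hx => ?_⟩
    have hx2 : x ∈ Metric.closedBall (0 : EuclideanSpace ℝ (Fin 2)) 2 := by
      simpa [Metric.mem_closedBall, dist_zero_right] using hx
    have := htset hx2
    simp only [Set.mem_iUnion, Metric.mem_ball] at this
    obtain ⟨g, hg, hlt⟩ := this
    exact ⟨g, hg, hlt⟩
  -- a scale-gap threshold
  obtain ⟨J, hJ⟩ : ∃ J : ℕ, 2 ≤ α * 2 ^ J := by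
    obtain ⟨J, hJ⟩ := pow_unbounded_of_one_lt (2 / α) (one_lt_two (α := ℝ))
    refine ⟨J, ?_⟩
    rw [div_lt_iff₀ hα] at hJ
    nlinarith
  set X : ℝ := 96 * ((grid.card : ℝ) + 1) * ((J : ℝ) + 1) with hX
  have hXpos : 0 < X := by positivity
  refine ⟨(Real.sqrt X)⁻¹, by positivity, ?_⟩
  intro n hn
  have hn0 : n ≠ 0 := by omega
  have hL4 : 4 ≤ Nat.log 2 n := by
    calc 4 = Nat.log 2 16 := (Nat.log_eq_of_pow_le_of_lt_pow (by norm_num) (by norm_num)).symm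
      _ ≤ Nat.log 2 n := Nat.log_mono_right hn
  set h := Nat.log 2 n - 1 with hhdef
  refine ⟨1, h, le_refl 1, by omega, ?_, ?_⟩
  · have hpow : 2 ^ (h + 1) ≤ n := by
      rw [show h + 1 = Nat.log 2 n from by omega]
      exact Nat.pow_log_le_self 2 hn0
    have h1 : 1 ≤ 2 ^ (h + 1) := Nat.one_le_two_pow
    omega
  · intro ρ hρ
    obtain ⟨q, hq⟩ := main_lemma α hα grid hgrid J hJ h (by omega) ρ hρ
    refine ⟨q, ?_⟩
    set r : ℝ := (Set.ncard {v : TreeApexVertex 1 h |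
      q ∈ Metric.ball (ρ v) (plyRadius (treesWithApex 1 h) ρ α v)} : ℝ) with hr
    have hr0 : (0:ℝ) ≤ r := by rw [hr]; positivity
    have hn1 : (1:ℝ) < n := by exact_mod_cast (by omega : 1 < n)
    have hlogn : 0 < Real.log n := Real.log_pos hn1
    -- n ≤ 4 * 2^h
    have hnat : n < 2 ^ (h + 2) := by
      calc n < 2 ^ (Nat.log 2 n + 1) := Nat.lt_pow_succ_log_self (by norm_num) n
        _ = 2 ^ (h + 2) := by rw [show Nat.log 2 n + 1 = h + 2 from by omega]
    have hn2h : (n : ℝ) ≤ 4 * 2 ^ h := by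
      have : (n : ℝ) < ((2 ^ (h + 2) : ℕ) : ℝ) := by exact_mod_cast hnat
      have he : ((2 ^ (h + 2) : ℕ) : ℝ) = 4 * 2 ^ h := by push_cast; ring
      linarith [he ▸ this]
    -- h ≤ 2 log n
    have hpow : 2 ^ (h + 1) ≤ n := by
      rw [show h + 1 = Nat.log 2 n from by omega]
      exact Nat.pow_log_le_self 2 hn0
    have hh2log : (h : ℝ) ≤ 2 * Real.log n := by
      have h1 : ((2:ℝ)) ^ (h + 1) ≤ (n : ℝ) := by exact_mod_cast hpow
      have h2 : Real.log ((2:ℝ) ^ (h + 1)) ≤ Real.log n :=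
        Real.log_le_log (by positivity) h1
      rw [Real.log_pow] at h2
      have h3 : (0:ℝ) ≤ (h : ℝ) := by positivity
      push_cast at h2
      nlinarith [Real.log_two_gt_d9]
    -- combine
    have e1 : (0:ℝ) ≤ 48 * ((grid.card : ℝ) + 1) * ((J : ℝ) + 1) := by positivity
    have e2 : (h : ℝ) * r ^ 2 ≤ 2 * Real.log n * r ^ 2 :=
      mul_le_mul_of_nonneg_right hh2log (sq_nonneg r)
    have step1 : (n : ℝ) ≤ 48 * ((grid.card : ℝ) + 1) * ((J : ℝ) + 1) * ((h : ℝ) * r ^ 2) := by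
      linarith [hq, hn2h]
    have step2 : 48 * ((grid.card : ℝ) + 1) * ((J : ℝ) + 1) * ((h : ℝ) * r ^ 2)
        ≤ 48 * ((grid.card : ℝ) + 1) * ((J : ℝ) + 1) * (2 * Real.log n * r ^ 2) :=
      mul_le_mul_of_nonneg_left e2 e1
    have hn_le : (n : ℝ) ≤ X * Real.log n * r ^ 2 := by
      rw [hX]
      linarith [step1, step2]
    have h1 : (n : ℝ) / Real.log n ≤ X * r ^ 2 := by
      rw [div_le_iff₀ hlogn]
      linarith [hn_le]
    have h2 : Real.sqrt ((n : ℝ) / Real.log n) ≤ Real.sqrt (X * r ^ 2) :=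
      Real.sqrt_le_sqrt h1
    have h3 : Real.sqrt (X * r ^ 2) = Real.sqrt X * r := by
      rw [Real.sqrt_mul hXpos.le, Real.sqrt_sq hr0]
    have hsX : 0 < Real.sqrt X := Real.sqrt_pos.2 hXpos
    calc (Real.sqrt X)⁻¹ * Real.sqrt ((n : ℝ) / Real.log n)
        ≤ (Real.sqrt X)⁻¹ * (Real.sqrt X * r) := by
          apply mul_le_mul_of_nonneg_left _ (inv_nonneg.2 hsX.le)
          rw [← h3]; exact h2
      _ = r := by rw [← mul_assoc, inv_mul_cancel₀ hsX.ne', one_mul]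
end

section
/- Let I be a finite index set, let R > 0, let x₀ ∈ ℝ², and for each i ∈ I let B(x_i, r_i) be an open disk in the plane with r_i > 0 such that B(x_i, r_i) ⊆ B(x₀, R). Then there exists a point q ∈ ℝ² that is contained in at least (∑_{i ∈ I} r_i²) / R² of the disks B(x_i, r_i); that is, the maximum depth of the family of disks is at least the ratio of the total area of the disks to the area of the containing disk. -/
open MeasureTheory Metric ENNReal

/-- If finitely many open disks `B(x i, r i)` with `r i > 0`
are all contained in a disk `B(x₀, R)`, then some point lies in at least
`(∑ r i²)/R²` of them: the maximum depth of the family is at least the ratio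
of the total area of the disks to the area of the containing disk. -/
theorem stmt10 (I : Type*) [Fintype I] (R : ℝ) (hR : 0 < R)
    (x₀ : EuclideanSpace ℝ (Fin 2)) (x : I → EuclideanSpace ℝ (Fin 2))
    (r : I → ℝ) (hr : ∀ i, 0 < r i)
    (hsub : ∀ i, Metric.ball (x i) (r i) ⊆ Metric.ball x₀ R) :
    ∃ q : EuclideanSpace ℝ (Fin 2),
      (∑ i, r i ^ 2) / R ^ 2 ≤ (Set.ncard {i | q ∈ Metric.ball (x i) (r i)} : ℝ) := by
  classical
  set d : EuclideanSpace ℝ (Fin 2) → ℕ := fun p => (Finset.univ.filter (fun i => p ∈ ball (x i) (r i))).card with hd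
  have hbdd : BddAbove (Set.range d) :=
    ⟨Fintype.card I, by rintro _ ⟨p, rfl⟩; exact Finset.card_filter_le _ _⟩
  obtain ⟨q, hq⟩ := Nat.sSup_mem ⟨d x₀, Set.mem_range_self _⟩ hbdd
  have hmax : ∀ p, d p ≤ d q := fun p => hq ▸ le_csSup hbdd (Set.mem_range_self _)
  refine ⟨q, ?_⟩
  have hncard : (Set.ncard {i | q ∈ Metric.ball (x i) (r i)} : ℝ) = d q := by
    rw [hd]
    norm_cast
    rw [Set.ncard_eq_toFinset_card']
    congr 1
    ext i; simp
  rw [hncard]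
  have hVpos : volume (ball (0:EuclideanSpace ℝ (Fin 2)) 1) ≠ 0 := (measure_ball_pos _ _ one_pos).ne'
  have hVlt : volume (ball (0:EuclideanSpace ℝ (Fin 2)) 1) ≠ ⊤ := measure_ball_lt_top.ne
  have hdim : Module.finrank ℝ (EuclideanSpace ℝ (Fin 2)) = 2 := finrank_euclideanSpace_fin
  have hball : ∀ (y : EuclideanSpace ℝ (Fin 2)) (ρ : ℝ), 0 ≤ ρ →
      volume (ball y ρ) = ENNReal.ofReal (ρ ^ 2) * volume (ball (0:EuclideanSpace ℝ (Fin 2)) 1) := by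
    intro y ρ hρ
    rw [Measure.addHaar_ball volume y hρ, hdim]
  have key : ∑ i, volume (ball (x i) (r i)) ≤ (d q : ℝ≥0∞) * volume (ball x₀ R) := by
    have h1 : ∑ i, volume (ball (x i) (r i))
        = ∫⁻ p, ∑ i, (ball (x i) (r i)).indicator (fun _ => (1:ℝ≥0∞)) p := by
      rw [lintegral_finset_sum]
      · simp [lintegral_indicator, measurableSet_ball]
      · exact fun i _ => measurable_const.indicator measurableSet_ball
    have h2 : ∀ p, (∑ i, (ball (x i) (r i)).indicator (fun _ => (1:ℝ≥0∞)) p)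
        ≤ (ball x₀ R).indicator (fun _ => (d q : ℝ≥0∞)) p := by
      intro p
      by_cases hp : p ∈ ball x₀ R
      · rw [Set.indicator_of_mem hp]
        have : (∑ i, (ball (x i) (r i)).indicator (fun _ => (1:ℝ≥0∞)) p)
            = (d p : ℝ≥0∞) := by
          simp only [Set.indicator_apply, hd]
          simp [Finset.sum_boole]
        rw [this]
        exact_mod_cast Nat.cast_le.mpr (hmax p)
      · rw [Set.indicator_of_notMem hp]
        have : ∀ i, (ball (x i) (r i)).indicator (fun _ => (1:ℝ≥0∞)) p = 0 := by
          intro i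
          exact Set.indicator_of_notMem (fun h => hp (hsub i h)) _
        simp [this]
    calc ∑ i, volume (ball (x i) (r i))
        = ∫⁻ p, ∑ i, (ball (x i) (r i)).indicator (fun _ => (1:ℝ≥0∞)) p := h1
      _ ≤ ∫⁻ p, (ball x₀ R).indicator (fun _ => (d q : ℝ≥0∞)) p := lintegral_mono h2
      _ = (d q : ℝ≥0∞) * volume (ball x₀ R) := by
          rw [lintegral_indicator measurableSet_ball]
          simp [mul_comm]
  -- convert to real inequality
  have key2 : ENNReal.ofReal (∑ i, r i ^ 2) ≤ ENNReal.ofReal ((d q : ℝ) * R ^ 2) := by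
    have hL : ∑ i, volume (ball (x i) (r i))
        = ENNReal.ofReal (∑ i, r i ^ 2) * volume (ball (0:EuclideanSpace ℝ (Fin 2)) 1) := by
      rw [ENNReal.ofReal_sum_of_nonneg (fun i _ => sq_nonneg (r i)), Finset.sum_mul]
      exact Finset.sum_congr rfl fun i _ => hball _ _ (hr i).le
    have hRvol : (d q : ℝ≥0∞) * volume (ball x₀ R)
        = ENNReal.ofReal ((d q : ℝ) * R ^ 2) * volume (ball (0:EuclideanSpace ℝ (Fin 2)) 1) := by
      rw [hball x₀ R hR.le, ENNReal.ofReal_mul (Nat.cast_nonneg _), ENNReal.ofReal_natCast,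
        mul_assoc]
    rw [hL, hRvol] at key
    exact (ENNReal.mul_le_mul_iff_left hVpos hVlt).mp key
  have key3 : ∑ i, r i ^ 2 ≤ (d q : ℝ) * R ^ 2 := by
    have h := (ENNReal.ofReal_le_ofReal_iff (by positivity)).mp key2
    exact h
  rw [div_le_iff₀ (by positivity)]
  exact key3
end

section
/- For natural Δ ≥ 3, let f(Δ) = sin(π/Δ)/(1 + sin(π/Δ)) and let α(Δ) = f(Δ)·√(1 − 2·f(Δ)·cos(2π/Δ) + f(Δ)²) − f(Δ)³/(1 − f(Δ)). Then Δ·α(Δ) tends to π as Δ → ∞; in particular α(Δ) = Θ(1/Δ). -/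
open Real Filter Topology

lemma sin_div_tendsto' : Tendsto (fun x : ℝ => Real.sin x / x) (𝓝[≠] 0) (𝓝 1) := by
  have h := Real.hasDerivAt_sin 0
  rw [Real.cos_zero] at h
  have := hasDerivAt_iff_tendsto_slope.mp h
  simpa [slope_fun_def, Real.sin_zero, div_eq_inv_mul] using this

lemma pi_div_tendsto : Tendsto (fun Δ : ℕ => π / (Δ : ℝ)) atTop (𝓝[≠] (0:ℝ)) := by
  rw [tendsto_nhdsWithin_iff]
  refine ⟨tendsto_const_div_atTop_nhds_zero_nat π, ?_⟩
  filter_upwards [eventually_ge_atTop 1] with Δ hΔ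
  have : (0:ℝ) < (Δ:ℝ) := by exact_mod_cast hΔ
  exact ne_of_gt (div_pos Real.pi_pos this)

lemma sin_mul_tendsto : Tendsto (fun Δ : ℕ => Real.sin (π / Δ) * Δ) atTop (𝓝 π) := by
  have h := (sin_div_tendsto'.comp pi_div_tendsto).mul_const π
  rw [one_mul] at h
  apply h.congr'
  filter_upwards [eventually_ge_atTop 1] with Δ hΔ
  have hΔ' : (0:ℝ) < (Δ:ℝ) := by exact_mod_cast hΔ
  have hπ := Real.pi_pos
  simp only [Function.comp_apply]
  field_simp

/-- With `f(Δ) = sin(π/Δ)/(1 + sin(π/Δ))` and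
`α(Δ) = f(Δ)·√(1 − 2f(Δ)·cos(2π/Δ) + f(Δ)²) − f(Δ)³/(1 − f(Δ))`, we have
`Δ·α(Δ) → π` as `Δ → ∞`; in particular `α(Δ) = Θ(1/Δ)`. -/
theorem stmt12 (f A : ℕ → ℝ)
    (hf : ∀ Δ : ℕ, f Δ = Real.sin (π / Δ) / (1 + Real.sin (π / Δ)))
    (hA : ∀ Δ : ℕ, A Δ =
      f Δ * Real.sqrt (1 - 2 * f Δ * Real.cos (2 * π / Δ) + f Δ ^ 2)
        - f Δ ^ 3 / (1 - f Δ)) :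
    Tendsto (fun Δ : ℕ => (Δ : ℝ) * A Δ) atTop (nhds π) := by
  -- sin(π/Δ) → 0
  have hsin0 : Tendsto (fun Δ : ℕ => Real.sin (π / Δ)) atTop (𝓝 0) := by
    have := (Real.continuous_sin.tendsto 0).comp
      (tendsto_const_div_atTop_nhds_zero_nat π)
    simpa [Function.comp_def] using this
  -- f → 0
  have hf0 : Tendsto f atTop (𝓝 0) := by
    have h := hsin0.div (hsin0.const_add 1) (by norm_num)
    simp only [add_zero, zero_div] at h
    exact h.congr fun Δ => (hf Δ).symm
  -- Δ·f → π
  have hΔf : Tendsto (fun Δ : ℕ => (Δ : ℝ) * f Δ) atTop (𝓝 π) := by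
    have h := sin_mul_tendsto.div (hsin0.const_add 1) (by norm_num)
    simp only [add_zero, div_one] at h
    apply h.congr
    intro Δ
    simp only [Pi.div_apply]
    rw [hf Δ]
    ring
  -- cos(2π/Δ) → 1
  have hcos : Tendsto (fun Δ : ℕ => Real.cos (2 * π / Δ)) atTop (𝓝 1) := by
    have h2 : Tendsto (fun Δ : ℕ => 2 * π / (Δ : ℝ)) atTop (𝓝 0) :=
      tendsto_const_div_atTop_nhds_zero_nat (2 * π)
    have := (Real.continuous_cos.tendsto 0).comp h2
    simpa [Function.comp_def] using this
  -- sqrt term → 1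
  have hsqrt : Tendsto (fun Δ : ℕ =>
      Real.sqrt (1 - 2 * f Δ * Real.cos (2 * π / Δ) + f Δ ^ 2)) atTop (𝓝 1) := by
    have hin : Tendsto (fun Δ : ℕ =>
        1 - 2 * f Δ * Real.cos (2 * π / Δ) + f Δ ^ 2) atTop (𝓝 1) := by
      have := ((tendsto_const_nhds : Tendsto (fun _ : ℕ => (1:ℝ)) atTop (𝓝 1)).sub ((hf0.const_mul 2).mul hcos)).add (hf0.pow 2)
      simpa using this
    have := (Real.continuous_sqrt.tendsto 1).comp hin
    simpa [Function.comp_def] using this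
  -- f²/(1-f) → 0
  have hrest : Tendsto (fun Δ : ℕ => f Δ ^ 2 / (1 - f Δ)) atTop (𝓝 0) := by
    have h := (hf0.pow 2).div ((tendsto_const_nhds : Tendsto (fun _ : ℕ => (1:ℝ)) atTop (𝓝 1)).sub hf0) (by norm_num : (1:ℝ) - 0 ≠ 0)
    simpa [Pi.div_def] using h
  -- combine
  have h := (hΔf.mul hsqrt).sub (hΔf.mul hrest)
  rw [mul_one, mul_zero, sub_zero] at h
  apply h.congr
  intro Δ
  rw [hA Δ]
  ring
end

section
/- Let X be a metric space, let α > 0, set c = 1 + 1/α, let v ∈ X, and let p : ℕ → X be a sequence with dist(v, p 0) = 1. Suppose that for every i < n, both α·dist(p i, p (i+1)) ≤ dist(v, p i) and α·dist(p i, p (i+1)) ≤ dist(v, p (i+1)) (i.e., neither endpoint of any edge has a ply disk of radius α times that edge length containing v). Then c^{−n} ≤ dist(v, p n) ≤ c^{n}. -/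
/-- Let `c = 1 + 1/α` and let `p` be a sequence in a metric
space with `dist v (p 0) = 1` such that for every `i < n` neither endpoint of
the edge `(p i, p (i+1))` has a ply disk of radius `α` times that edge length
containing `v`.  Then `c^{-n} ≤ dist v (p n) ≤ c^n`. -/
theorem stmt17 {X : Type*} [MetricSpace X] (α : ℝ) (hα : 0 < α)
    (c : ℝ) (hc : c = 1 + 1 / α) (v : X) (p : ℕ → X) (h0 : dist v (p 0) = 1)
    (n : ℕ)
    (h : ∀ i : ℕ, i < n →
      α * dist (p i) (p (i + 1)) ≤ dist v (p i) ∧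
      α * dist (p i) (p (i + 1)) ≤ dist v (p (i + 1))) :
    (c ^ n)⁻¹ ≤ dist v (p n) ∧ dist v (p n) ≤ c ^ n := by
  have hc1 : 1 < c := by
    rw [hc]; have : 0 < 1 / α := by positivity
    linarith
  have hc0 : 0 < c := by linarith
  induction n with
  | zero => simp [h0]
  | succ n ih =>
    obtain ⟨ih1, ih2⟩ := ih (fun i hi => h i (Nat.lt_succ_of_lt hi))
    obtain ⟨h1, h2⟩ := h n (Nat.lt_succ_self n)
    have hd : dist (p n) (p (n+1)) ≤ dist v (p n) / α := by
      rw [div_eq_inv_mul, ← inv_mul_cancel_left₀ hα.ne' (dist (p n) (p (n+1)))]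
      exact mul_le_mul_of_nonneg_left h1 (by positivity)
    have hd2 : dist (p n) (p (n+1)) ≤ dist v (p (n+1)) / α := by
      rw [div_eq_inv_mul, ← inv_mul_cancel_left₀ hα.ne' (dist (p n) (p (n+1)))]
      exact mul_le_mul_of_nonneg_left h2 (by positivity)
    constructor
    · -- lower bound
      have tri : dist v (p n) ≤ dist v (p (n+1)) + dist (p n) (p (n+1)) :=
        (dist_triangle v (p (n+1)) (p n)).trans_eq (by rw [dist_comm (p (n+1)) (p n)])
      have : dist v (p n) ≤ c * dist v (p (n+1)) := by
        rw [hc, one_div]; have := hd2; rw [div_eq_mul_inv] at this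
        nlinarith [dist_nonneg (x := v) (y := p (n+1))]
      have hstep : (c ^ n)⁻¹ ≤ c * dist v (p (n+1)) := le_trans ih1 this
      rw [pow_succ, mul_inv]
      calc (c ^ n)⁻¹ * c⁻¹ ≤ (c * dist v (p (n+1))) * c⁻¹ :=
            mul_le_mul_of_nonneg_right hstep (by positivity)
        _ = dist v (p (n+1)) := by field_simp
    · have tri : dist v (p (n+1)) ≤ dist v (p n) + dist (p n) (p (n+1)) :=
        dist_triangle v (p n) (p (n+1))
      have : dist v (p (n+1)) ≤ c * dist v (p n) := by
        rw [hc, one_div]; have := hd; rw [div_eq_mul_inv] at this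
        nlinarith [dist_nonneg (x := v) (y := p n)]
      calc dist v (p (n+1)) ≤ c * dist v (p n) := this
        _ ≤ c * c ^ n := mul_le_mul_of_nonneg_left ih2 hc0.le
        _ = c ^ (n+1) := by ring
end

section
/- Let 0 < β ≤ π/2 and let q ∈ ℝ² be a point with ‖q − (1,0)‖ < sin β. Then q ≠ (0,0) and the angle at the origin between q and the point (1,0) is strictly less than β. That is, the open disk of radius sin β centered at the point (1,0) is contained in the open wedge of half-angle β around the positive x-axis with apex at the origin. -/
open Real

/-- For `0 < β ≤ π/2`, the open disk of radius `sin β`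
centered at `(1,0)` is contained in the open wedge of half-angle `β` around
the positive `x`-axis with apex at the origin: any `q` with
`‖q − (1,0)‖ < sin β` is nonzero and the angle `∠ q 0 (1,0)` is less than `β`. -/
theorem stmt19 (β : ℝ) (hβ0 : 0 < β) (hβ : β ≤ π / 2)
    (q e : EuclideanSpace ℝ (Fin 2))
    (he : e = (EuclideanSpace.equiv (Fin 2) ℝ).symm ![1, 0])
    (hq : ‖q - e‖ < Real.sin β) :
    q ≠ 0 ∧ EuclideanGeometry.angle q 0 e < β := by
  have hπ := Real.pi_pos
  have hsβ1 : Real.sin β ≤ 1 := Real.sin_le_one β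
  have hsβ0 : 0 < Real.sin β :=
    Real.sin_pos_of_pos_of_lt_pi hβ0 (by linarith)
  have hne : ‖e‖ = 1 := by
    subst he
    rw [EuclideanSpace.norm_eq]
    simp [Fin.sum_univ_two]
  have hq0 : q ≠ 0 := by
    rintro rfl
    rw [zero_sub, norm_neg, hne] at hq
    linarith
  have hr0 : 0 < ‖q‖ := norm_pos_iff.mpr hq0
  set θ := EuclideanGeometry.angle q 0 e with hθ
  have hθ0 : 0 ≤ θ := EuclideanGeometry.angle_nonneg _ _ _
  have hθπ : θ ≤ π := EuclideanGeometry.angle_le_pi _ _ _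
  have hlaw := EuclideanGeometry.law_cos q (0 : EuclideanSpace ℝ (Fin 2)) e
  rw [dist_eq_norm, dist_eq_norm, dist_eq_norm, sub_zero, sub_zero, hne] at hlaw
  -- hlaw : ‖q - e‖ ^ 2 = ‖q‖ ^ 2 + 1 ^ 2 - 2 * ‖q‖ * 1 * cos θ
  have hd0 : 0 ≤ ‖q - e‖ := norm_nonneg _
  have hpyth : Real.sin θ ^ 2 + Real.cos θ ^ 2 = 1 := Real.sin_sq_add_cos_sq θ
  have hcos : 0 < Real.cos θ := by
    by_contra h
    push_neg at h
    nlinarith [sq_nonneg ‖q‖]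
  have hθlt : θ < π / 2 := by
    by_contra h
    push_neg at h
    have : Real.cos θ ≤ 0 :=
      Real.cos_nonpos_of_pi_div_two_le_of_le h (by linarith)
    linarith
  have hsinθ : 0 ≤ Real.sin θ := Real.sin_nonneg_of_nonneg_of_le_pi hθ0 hθπ
  have hsin_le : Real.sin θ ≤ ‖q - e‖ := by
    nlinarith [sq_nonneg (‖q‖ - Real.cos θ)]
  have hsinlt : Real.sin θ < Real.sin β := lt_of_le_of_lt hsin_le hq
  refine ⟨hq0, ?_⟩
  by_contra h
  push_neg at h
  have : Real.sin β ≤ Real.sin θ :=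
    Real.strictMonoOn_sin.monotoneOn ⟨by linarith, hβ⟩ ⟨by linarith, hθlt.le⟩ h
  linarith
end
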